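/- arXiv:2310.00978 — 3 statements merged into one kernel-verified Lean document; each statement's English description precedes it below -/
import Mathlib

section
/- For the doubling map T(x)=2x mod 1 on [0,1] with observable v(x)=x^{-1/α} (α∈(0,1)), inducing on X=[1/2,1] with first return time R(x)=inf{n≥1: T^n x∈X}, the Birkhoff sums satisfy: for x∈X and 1≤ℓ≤R(x), v(T^ℓ x) = (x-1/2)^{-1/α} c^ℓ where c=2^{-1/α}, and hence v_ℓ(x) = v(x) + (c^{-1}-1)^{-1}(1-c^{ℓ-1})(x-1/2)^{-1/α}. -/
open Set Finset

/-- The doubling map `T x = 2x mod 1`. -/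
noncomputable def doublingT : ℝ → ℝ := fun x => Int.fract (2 * x)

theorem stmt0 (α : ℝ) (hα : α ∈ Set.Ioo (0:ℝ) 1)
    (v : ℝ → ℝ) (hv : ∀ x, v x = x ^ (-(1/α)))
    (c : ℝ) (hc : c = (2:ℝ) ^ (-(1/α)))
    (R : ℝ → ℕ)
    (hR : ∀ x, R x = sInf {n : ℕ | 1 ≤ n ∧ doublingT^[n] x ∈ Set.Icc (1/2:ℝ) 1})
    (x : ℝ) (hx : x ∈ Set.Icc (1/2:ℝ) 1) :
    (∀ ℓ : ℕ, 1 ≤ ℓ → ℓ ≤ R x →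
      v (doublingT^[ℓ] x) = (x - 1/2) ^ (-(1/α)) * c ^ ℓ) ∧
    (∀ ℓ : ℕ, 1 ≤ ℓ → ℓ ≤ R x →
      ∑ j ∈ Finset.range ℓ, v (doublingT^[j] x)
        = v x + (c⁻¹ - 1)⁻¹ * (1 - c ^ (ℓ - 1)) * (x - 1/2) ^ (-(1/α))) := by
  obtain ⟨hx1, hx2⟩ := hx
  obtain ⟨hα0, hα1⟩ := hα
  by_cases hx1' : x = 1
  · -- boundary case x = 1 : R x = 0, all statements vacuous
    subst hx1'
    have hT0 : doublingT 0 = 0 := by simp [doublingT]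
    have hiter : ∀ n, 1 ≤ n → doublingT^[n] (1:ℝ) = 0 := by
      intro n hn
      induction n with
      | zero => omega
      | succ m ih =>
        rcases Nat.eq_zero_or_pos m with hm | hm
        · subst hm
          norm_num [doublingT, Int.fract]
        · rw [Function.iterate_succ_apply', ih hm, hT0]
    have hRx : R 1 = 0 := by
      rw [hR]
      have : {n : ℕ | 1 ≤ n ∧ doublingT^[n] (1:ℝ) ∈ Set.Icc (1/2:ℝ) 1} = ∅ := by
        ext n
        simp only [Set.mem_setOf_eq, Set.mem_empty_iff_false, iff_false, not_and]
        intro hn hmem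
        rw [hiter n hn] at hmem
        have := hmem.1
        norm_num at this
      rw [this, Nat.sInf_empty]
    constructor <;> (intro ℓ h1 h2; rw [hRx] at h2; omega)
  · have hx2' : x < 1 := lt_of_le_of_ne hx2 hx1'
    have hxh : (0:ℝ) ≤ x - 1/2 := by linarith
    have key : ∀ ℓ : ℕ, 1 ≤ ℓ → ℓ ≤ R x →
        doublingT^[ℓ] x = 2^ℓ * (x - 1/2) := by
      intro ℓ
      induction ℓ with
      | zero => omega
      | succ m ih =>
        intro _ hle
        rcases Nat.eq_zero_or_pos m with hm | hm
        · subst hm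
          simp only [zero_add, Function.iterate_one, doublingT]
          have h1 : Int.fract (2*x) = Int.fract (2*x - 1) := by
            rw [show (1:ℝ) = ((1:ℤ):ℝ) by norm_num, Int.fract_sub_intCast]
          rw [h1, Int.fract_eq_self.mpr ⟨by linarith, by linarith⟩]
          ring
        · have ihm := ih hm (by omega)
          have hnot : doublingT^[m] x ∉ Set.Icc (1/2:ℝ) 1 := by
            intro hmem
            have hRm : R x ≤ m := by
              rw [hR]; exact Nat.sInf_le ⟨hm, hmem⟩
            omega
          have hlt1 : doublingT^[m] x < 1 := by
            have h2 : doublingT^[m] x = doublingT (doublingT^[m-1] x) := by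
              conv_lhs => rw [show m = (m-1)+1 by omega, Function.iterate_succ_apply']
            rw [h2]
            exact Int.fract_lt_one _
          have hy0 : (0:ℝ) ≤ doublingT^[m] x := by
            rw [ihm]
            exact mul_nonneg (by positivity) hxh
          have hlt : doublingT^[m] x < 1/2 := by
            by_contra h
            exact hnot ⟨le_of_not_gt h, le_of_lt hlt1⟩
          rw [Function.iterate_succ_apply']
          show Int.fract (2 * doublingT^[m] x) = _
          rw [Int.fract_eq_self.mpr ⟨by linarith, by linarith⟩, ihm]
          ring
    have hcpow : ∀ ℓ : ℕ, ((2:ℝ)^ℓ : ℝ) ^ (-(1/α)) = c ^ ℓ := by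
      intro ℓ
      rw [hc, ← Real.rpow_natCast (2:ℝ) ℓ, ← Real.rpow_mul (by norm_num),
        mul_comm, Real.rpow_mul (by norm_num), Real.rpow_natCast]
    have part1 : ∀ ℓ : ℕ, 1 ≤ ℓ → ℓ ≤ R x →
        v (doublingT^[ℓ] x) = (x - 1/2) ^ (-(1/α)) * c ^ ℓ := by
      intro ℓ h1 h2
      rw [hv, key ℓ h1 h2, Real.mul_rpow (by positivity) hxh, hcpow, mul_comm]
    refine ⟨part1, ?_⟩
    intro ℓ h1 h2
    obtain ⟨m, rfl⟩ : ∃ m, ℓ = m + 1 := ⟨ℓ - 1, by omega⟩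
    rw [Finset.sum_range_succ']
    simp only [Function.iterate_zero_apply, Nat.add_sub_cancel]
    have hterm : ∀ j ∈ Finset.range m,
        v (doublingT^[j+1] x) = ((x - 1/2) ^ (-(1/α)) * c) * c ^ j := by
      intro j hj
      rw [part1 (j+1) (by omega) (by have := Finset.mem_range.mp hj; omega)]
      ring
    rw [Finset.sum_congr rfl hterm, ← Finset.mul_sum]
    have hc0 : 0 < c := by rw [hc]; positivity
    have hc1 : c < 1 := by
      rw [hc]
      exact Real.rpow_lt_one_of_one_lt_of_neg (by norm_num)
        (by rw [neg_lt, neg_zero]; positivity)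
    have hcne1 : c ≠ 1 := ne_of_lt hc1
    have hcne0 : c ≠ 0 := ne_of_gt hc0
    rw [geom_sum_eq hcne1]
    have hsub1 : c - 1 ≠ 0 := sub_ne_zero.mpr hcne1
    have hsub2 : c⁻¹ - 1 ≠ 0 := by
      refine sub_ne_zero.mpr fun h => hcne1 ?_
      rw [← inv_inv c, h, inv_one]
    have hsub3 : (1:ℝ) - c ≠ 0 := sub_ne_zero.mpr hc1.ne'
    field_simp
    ring
end

section
/- Let Z be an ℝ^d-valued random variable that is regularly varying of order α with spectral measure ν = Σ_{i∈I} a_i δ_{ω_i} supported on finitely many distinct unit vectors ω_i, and let H be an ℝ^d-valued random variable defined on the same space with |H| ≤ C|Z|^{1−η} + C for some constants C>0, η∈(0,1). Then V = Z + H is also regularly varying of order α with the same spectral measure ν, and P(|V|>t) ∼ P(|Z|>t) as t→∞. -/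
open MeasureTheory Filter Topology Metric
open scoped ENNReal

-- unit vector difference bound
lemma hat_dist_aux {E : Type*} [NormedAddCommGroup E] [NormedSpace ℝ E]
    (v z : E) (hv : v ≠ 0) (hz : z ≠ 0) :
    ‖‖v‖⁻¹ • v - ‖z‖⁻¹ • z‖ ≤ 2 * ‖v - z‖ / ‖v‖ := by
  have hvp : (0:ℝ) < ‖v‖ := norm_pos_iff.2 hv
  have hzp : (0:ℝ) < ‖z‖ := norm_pos_iff.2 hz
  have hid : ‖v‖⁻¹ • v - ‖z‖⁻¹ • z = ‖v‖⁻¹ • (v - z) + (‖v‖⁻¹ - ‖z‖⁻¹) • z := by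
    rw [smul_sub, sub_smul]; abel
  rw [hid]
  refine (norm_add_le _ _).trans ?_
  have h1 : ‖‖v‖⁻¹ • (v - z)‖ = ‖v - z‖ / ‖v‖ := by
    rw [norm_smul, Real.norm_eq_abs, abs_inv, abs_of_pos hvp]; ring
  have h2 : ‖(‖v‖⁻¹ - ‖z‖⁻¹) • z‖ ≤ ‖v - z‖ / ‖v‖ := by
    rw [norm_smul, Real.norm_eq_abs]
    have he : ‖v‖⁻¹ - ‖z‖⁻¹ = (‖z‖ - ‖v‖) / (‖v‖ * ‖z‖) := by field_simp
    rw [he, abs_div, abs_of_pos (mul_pos hvp hzp)]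
    have hb : |‖z‖ - ‖v‖| ≤ ‖v - z‖ :=
      (abs_norm_sub_norm_le z v).trans (le_of_eq (norm_sub_rev z v))
    rw [div_mul_eq_mul_div, div_le_div_iff₀ (mul_pos hvp hzp) hvp]
    calc |‖z‖ - ‖v‖| * ‖z‖ * ‖v‖ ≤ ‖v - z‖ * ‖z‖ * ‖v‖ :=
          mul_le_mul_of_nonneg_right (mul_le_mul_of_nonneg_right hb hzp.le) hvp.le
      _ = ‖v - z‖ * (‖v‖ * ‖z‖) := by ring
  rw [h1]
  calc ‖v - z‖ / ‖v‖ + ‖(‖v‖⁻¹ - ‖z‖⁻¹) • z‖ ≤ ‖v - z‖ / ‖v‖ + ‖v - z‖ / ‖v‖ :=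
        add_le_add le_rfl h2
    _ = 2 * ‖v - z‖ / ‖v‖ := by ring

-- H is small compared to Z when Z is large
lemma smallH_aux {C η δ r h : ℝ} (hC : 0 < C) (hη : 0 < η) (hη1 : η < 1) (hδ : 0 < δ)
    (hr : max (max ((2*C/δ) ^ (1/η)) (2*C/δ)) 1 ≤ r)
    (hh : h ≤ C * r ^ (1-η) + C) : h ≤ δ * r := by
  have hr1 : (1:ℝ) ≤ r := le_trans (le_max_right _ _) hr
  have hrpos : (0:ℝ) < r := lt_of_lt_of_le one_pos hr1
  have hq : (0:ℝ) < 2*C/δ := by positivity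
  have hr2 : 2*C/δ ≤ r := le_trans ((le_max_right _ _).trans (le_max_left _ _)) hr
  have hr3 : (2*C/δ) ^ (1/η) ≤ r := le_trans ((le_max_left _ _).trans (le_max_left _ _)) hr
  have hs : 2*C/δ ≤ r ^ η := by
    have := Real.rpow_le_rpow (Real.rpow_nonneg hq.le _) hr3 hη.le
    rwa [← Real.rpow_mul hq.le, one_div, inv_mul_cancel₀ (ne_of_gt hη), Real.rpow_one] at this
  have hspos : (0:ℝ) < r ^ η := Real.rpow_pos_of_pos hrpos _
  have hrw : r ^ (1-η) = r / r ^ η := by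
    rw [Real.rpow_sub hrpos, Real.rpow_one]
  have key1 : C * r ^ (1-η) ≤ δ * r / 2 := by
    rw [hrw, mul_div_assoc']
    rw [div_le_div_iff₀ hspos two_pos]
    have h5 : (δ*r)*(2*C/δ) ≤ (δ*r)*(r^η) := mul_le_mul_of_nonneg_left hs (by positivity)
    have hmul : δ * (2*C/δ) = 2*C := by field_simp
    have h6 : r * (δ * (2*C/δ)) = r*(2*C) := by rw [hmul]
    nlinarith [h5, h6]
  have key2 : C ≤ δ * r / 2 := by
    have h7 : δ * (2*C/δ) ≤ δ * r := mul_le_mul_of_nonneg_left hr2 hδ.le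
    have hmul : δ * (2*C/δ) = 2*C := by field_simp
    linarith
  linarith

-- liminf lower bound by subtraction
lemma liminf_sub_aux {u v : ℝ → ℝ≥0∞} {L M : ℝ≥0∞} (hM : M ≠ ∞)
    (h1 : Tendsto (fun t => u t + v t) atTop (𝓝 (L + M)))
    (h2 : limsup v atTop ≤ M) : L ≤ liminf u atTop := by
  refine (le_liminf_iff (by isBoundedDefault) (by isBoundedDefault)).2 fun b hb => ?_
  have hbne : b ≠ ∞ := (hb.trans_le le_top).ne
  obtain ⟨r, hr0, hr⟩ := ENNReal.lt_iff_exists_add_pos_lt.1 hb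
  have hrne : (r:ℝ≥0∞) ≠ ∞ := ENNReal.coe_ne_top
  have hev1 : ∀ᶠ t in atTop, b + r + M < u t + v t := by
    have hlt : b + r + M < L + M := ENNReal.add_lt_add_right hM hr
    exact h1.eventually (eventually_gt_nhds hlt)
  have hev2 : ∀ᶠ t in atTop, v t < M + r := by
    refine eventually_lt_of_limsup_lt (h2.trans_lt ?_)
    exact ENNReal.lt_add_right hM (by exact_mod_cast hr0.ne')
  filter_upwards [hev1, hev2] with t h1t h2t
  by_contra hbu
  push_neg at hbu
  have : u t + v t < b + (M + r) :=
    lt_of_le_of_lt (add_le_add_left hbu _) (ENNReal.add_lt_add_left hbne h2t)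
  rw [← add_assoc] at this
  have heq : b + M + r = b + r + M := by ring
  exact absurd (h1t.trans (heq ▸ this)) (lt_irrefl _)

def RegVary {Ω : Type*} [MeasurableSpace Ω] (μ : Measure Ω) {d : ℕ}
    (Z : Ω → EuclideanSpace ℝ (Fin d)) (α : ℝ)
    (ν : Measure (EuclideanSpace ℝ (Fin d))) : Prop :=
  ∀ lam : ℝ, 0 < lam → ∀ S : Set (EuclideanSpace ℝ (Fin d)), MeasurableSet S →
    ν (frontier S) = 0 →
    Tendsto (fun t : ℝ => μ {x | lam * t < ‖Z x‖ ∧ ‖Z x‖⁻¹ • Z x ∈ S}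
        / μ {x | t < ‖Z x‖}) atTop (𝓝 (ENNReal.ofReal (lam ^ (-α)) * ν S))
theorem stmt10 {Ω : Type*} [MeasurableSpace Ω] (μ : Measure Ω) [IsProbabilityMeasure μ]
    (d : ℕ) (α : ℝ) (hα : α ∈ Set.Ioo (0:ℝ) 2)
    {I : Type*} [Fintype I] [Nonempty I]
    (a : I → ℝ) (ha : ∀ i, 0 < a i) (hsum : ∑ i, a i = 1)
    (ω : I → EuclideanSpace ℝ (Fin d)) (hω : ∀ i, ‖ω i‖ = 1)
    (hinj : Function.Injective ω)
    (ν : Measure (EuclideanSpace ℝ (Fin d)))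
    (hν : ν = Measure.sum (fun i : I => ENNReal.ofReal (a i) • Measure.dirac (ω i)))
    (Z H : Ω → EuclideanSpace ℝ (Fin d))
    (hZmeas : Measurable Z) (hHmeas : Measurable H)
    (hZ : RegVary μ Z α ν)
    (C η : ℝ) (hC : 0 < C) (hη : η ∈ Set.Ioo (0:ℝ) 1)
    (hH : ∀ᵐ x ∂μ, ‖H x‖ ≤ C * ‖Z x‖ ^ (1 - η) + C) :
    RegVary μ (fun x => Z x + H x) α ν ∧
    Tendsto (fun t : ℝ => μ {x | t < ‖Z x + H x‖} / μ {x | t < ‖Z x‖})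
      atTop (𝓝 1) := by
  classical
  -- measure ν as a finite sum of weighted diracs
  have hνU : ∀ U : Set (EuclideanSpace ℝ (Fin d)), MeasurableSet U →
      ν U = ∑ i, (if ω i ∈ U then ENNReal.ofReal (a i) else 0) := by
    intro U hU
    rw [hν, Measure.sum_apply _ hU, tsum_fintype]
    congr 1; funext i
    rw [Measure.smul_apply, Measure.dirac_apply' _ hU]
    by_cases h : ω i ∈ U <;> simp [Set.indicator, h]
  have hν_univ : ν Set.univ = 1 := by
    rw [hνU _ MeasurableSet.univ]
    simp only [Set.mem_univ, if_true]
    rw [← ENNReal.ofReal_sum_of_nonneg (fun i _ => (ha i).le), hsum, ENNReal.ofReal_one]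
  have hν_fin : ∀ U : Set (EuclideanSpace ℝ (Fin d)), ν U ≠ ∞ := by
    intro U
    refine ne_top_of_le_ne_top ?_ (measure_mono (Set.subset_univ U))
    rw [hν_univ]; exact ENNReal.one_ne_top
  have hν_zero : ∀ U : Set (EuclideanSpace ℝ (Fin d)), MeasurableSet U →
      (∀ i, ω i ∉ U) → ν U = 0 := by
    intro U hU h
    rw [hνU U hU]
    exact Finset.sum_eq_zero fun i _ => by simp [h i]
  have hν_mem : ∀ U : Set (EuclideanSpace ℝ (Fin d)), MeasurableSet U →
      ν U = 0 → ∀ i, ω i ∉ U := by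
    intro U hU h0 i hi
    rw [hνU U hU] at h0
    have := Finset.sum_eq_zero_iff.1 h0 i (Finset.mem_univ i)
    rw [if_pos hi] at this
    exact absurd this (by simp [ENNReal.ofReal_eq_zero, not_le, ha i])
  have hVmeas : Measurable fun x => Z x + H x := hZmeas.add hHmeas
  have hZuniv : ∀ lam : ℝ, 0 < lam → Tendsto
      (fun t => μ {x | lam * t < ‖Z x‖} / μ {x | t < ‖Z x‖}) atTop
      (𝓝 (ENNReal.ofReal (lam ^ (-α)))) := by
    intro lam hlam
    have h := hZ lam hlam Set.univ MeasurableSet.univ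
      (by rw [frontier_univ]; exact measure_empty)
    rw [hν_univ, mul_one] at h
    refine h.congr fun t => ?_
    congr 2
    ext x; simp
  have hpt : ∀ δ : ℝ, δ ∈ Set.Ioc (0:ℝ) (1/2) → ∀ lam : ℝ, 0 < lam →
      ∀ᶠ t : ℝ in atTop, ∀ᵐ x ∂μ,
        ((lam * t < ‖Z x + H x‖ →
            (lam / (1+δ)) * t < ‖Z x‖ ∧
            ‖‖Z x + H x‖⁻¹ • (Z x + H x) - ‖Z x‖⁻¹ • Z x‖ ≤ 4*δ) ∧
         ((lam / (1-δ)) * t < ‖Z x‖ →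
            lam * t < ‖Z x + H x‖ ∧
            ‖‖Z x + H x‖⁻¹ • (Z x + H x) - ‖Z x‖⁻¹ • Z x‖ ≤ 4*δ)) := by
    intro δ hδ lam hlam
    obtain ⟨hδ0, hδ2⟩ := hδ
    set M : ℝ := max (max ((2*C/δ) ^ (1/η)) (2*C/δ)) 1 with hMdef
    have hM1 : (1:ℝ) ≤ M := le_max_right _ _
    have h1δ : (0:ℝ) < 1 - δ := by linarith
    have htlin : Tendsto (fun t : ℝ => lam * t) atTop atTop :=
      tendsto_id.const_mul_atTop hlam
    have htlin2 : Tendsto (fun t : ℝ => (lam/(1-δ)) * t) atTop atTop :=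
      tendsto_id.const_mul_atTop (by positivity)
    filter_upwards [htlin.eventually_ge_atTop (M + (C * M ^ (1-η) + C) + 1),
      htlin2.eventually_ge_atTop (M + 1)] with t h1 h2
    filter_upwards [hH] with x hx
    have hZnn : (0:ℝ) ≤ ‖Z x‖ := norm_nonneg _
    have core : M < ‖Z x‖ → ‖H x‖ ≤ δ * ‖Z x‖ ∧
        (1-δ) * ‖Z x‖ ≤ ‖Z x + H x‖ ∧ ‖Z x + H x‖ ≤ (1+δ) * ‖Z x‖ ∧
        ‖‖Z x + H x‖⁻¹ • (Z x + H x) - ‖Z x‖⁻¹ • Z x‖ ≤ 4*δ := by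
      intro hZbig
      have hZpos : (0:ℝ) < ‖Z x‖ := lt_of_lt_of_le one_pos (hM1.trans hZbig.le)
      have hHs : ‖H x‖ ≤ δ * ‖Z x‖ := smallH_aux hC hη.1 hη.2 hδ0 hZbig.le hx
      have hub : ‖Z x + H x‖ ≤ ‖Z x‖ + ‖H x‖ := norm_add_le _ _
      have hlb : ‖Z x‖ - ‖H x‖ ≤ ‖Z x + H x‖ := by
        have h5 := norm_add_le (Z x + H x) (-H x)
        simp only [add_neg_cancel_right, norm_neg] at h5
        linarith
      have hVge : (1-δ) * ‖Z x‖ ≤ ‖Z x + H x‖ := by nlinarith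
      have hVle : ‖Z x + H x‖ ≤ (1+δ) * ‖Z x‖ := by nlinarith
      have hVpos : (0:ℝ) < ‖Z x + H x‖ :=
        lt_of_lt_of_le (by positivity) hVge
      have hVne : Z x + H x ≠ 0 := by
        intro h0; rw [h0, norm_zero] at hVpos; exact lt_irrefl _ hVpos
      have hZne : Z x ≠ 0 := by
        intro h0; rw [h0, norm_zero] at hZpos; exact lt_irrefl _ hZpos
      refine ⟨hHs, hVge, hVle, ?_⟩
      have hb := hat_dist_aux (Z x + H x) (Z x) hVne hZne
      have hsub : (Z x + H x) - Z x = H x := by abel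
      rw [hsub] at hb
      refine hb.trans ?_
      rw [div_le_iff₀ hVpos]
      nlinarith
    constructor
    · intro hVt
      have hZbig : M < ‖Z x‖ := by
        by_contra hle
        push_neg at hle
        have h5 : ‖Z x‖ ^ (1-η) ≤ M ^ (1-η) :=
          Real.rpow_le_rpow hZnn hle (by linarith [hη.2])
        have h6 : ‖Z x + H x‖ ≤ ‖Z x‖ + ‖H x‖ := norm_add_le _ _
        have h7 := mul_le_mul_of_nonneg_left h5 hC.le
        linarith
      obtain ⟨hHs, hVge, hVle, hhat⟩ := core hZbig
      refine ⟨?_, hhat⟩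
      rw [div_mul_eq_mul_div, div_lt_iff₀ (by linarith : (0:ℝ) < 1+δ)]
      calc lam * t < ‖Z x + H x‖ := hVt
        _ ≤ (1+δ) * ‖Z x‖ := hVle
        _ = ‖Z x‖ * (1+δ) := mul_comm _ _
    · intro hZt
      have hZbig : M < ‖Z x‖ := by linarith
      obtain ⟨hHs, hVge, hVle, hhat⟩ := core hZbig
      refine ⟨?_, hhat⟩
      have hlamt : lam * t = (1-δ) * ((lam/(1-δ)) * t) := by
        field_simp
      calc lam * t = (1-δ) * ((lam/(1-δ)) * t) := hlamt
        _ < (1-δ) * ‖Z x‖ := by exact mul_lt_mul_of_pos_left hZt h1δ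
        _ ≤ ‖Z x + H x‖ := hVge
  have hUB : ∀ lam : ℝ, 0 < lam → ∀ S : Set (EuclideanSpace ℝ (Fin d)), MeasurableSet S →
      ν (frontier S) = 0 →
      limsup (fun t : ℝ => μ {x | lam * t < ‖Z x + H x‖ ∧ ‖Z x + H x‖⁻¹ • (Z x + H x) ∈ S}
        / μ {x | t < ‖Z x‖}) atTop ≤ ENNReal.ofReal (lam ^ (-α)) * ν S := by
    intro lam hlam S hSm hfrS
    rcases S.eq_empty_or_nonempty with rfl | hSne
    · have he : (fun t : ℝ => μ {x | lam * t < ‖Z x + H x‖ ∧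
          ‖Z x + H x‖⁻¹ • (Z x + H x) ∈ (∅ : Set (EuclideanSpace ℝ (Fin d)))}
          / μ {x | t < ‖Z x‖}) = fun _ => 0 := by
        funext t; simp
      rw [he, limsup_const]
      simp
    · have hcont : Tendsto (fun δ : ℝ => (lam/(1+δ)) ^ (-α)) (𝓝 (0:ℝ)) (𝓝 (lam ^ (-α))) := by
        have h1 : Tendsto (fun δ : ℝ => lam/(1+δ)) (𝓝 (0:ℝ)) (𝓝 lam) := by
          have hca : ContinuousAt (fun δ : ℝ => lam/(1+δ)) 0 := by
            apply ContinuousAt.div continuousAt_const (continuousAt_const.add continuousAt_id)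
            norm_num
          simpa using hca.tendsto
        have h2 : ContinuousAt (fun y : ℝ => y ^ (-α)) lam :=
          Real.continuousAt_rpow_const _ _ (Or.inl (ne_of_gt hlam))
        exact h2.tendsto.comp h1
      have hT : Tendsto (fun δ : ℝ => ENNReal.ofReal ((lam/(1+δ)) ^ (-α)) * ν S)
          (𝓝[>] (0:ℝ)) (𝓝 (ENNReal.ofReal (lam ^ (-α)) * ν S)) := by
        apply ENNReal.Tendsto.mul_const
          ((ENNReal.continuous_ofReal.tendsto _).comp (hcont.mono_left nhdsWithin_le_nhds))
          (Or.inr (hν_fin S))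
      refine ge_of_tendsto hT ?_
      have hev : ∀ᶠ δ : ℝ in 𝓝[>] (0:ℝ),
          δ ≤ 1/2 ∧ ∀ i, ω i ∉ closure S → 4*δ < infDist (ω i) S := by
        refine Filter.Eventually.and ?_ ?_
        · have h0 : ∀ᶠ δ : ℝ in 𝓝 0, δ ≤ 1/2 := by
            filter_upwards [Iio_mem_nhds (by norm_num : (0:ℝ) < 1/2)] with δ h using le_of_lt h
          exact h0.filter_mono nhdsWithin_le_nhds
        · rw [eventually_all]
          intro i
          by_cases hc : ω i ∈ closure S
          · exact Eventually.of_forall fun δ h => absurd hc h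
          · have hpos : 0 < infDist (ω i) S := by
              rw [← infDist_closure]
              exact (IsClosed.notMem_iff_infDist_pos isClosed_closure hSne.closure).1 hc
            have hmem4 : Set.Ioo (0:ℝ) (infDist (ω i) S / 4) ∈ 𝓝[>] (0:ℝ) :=
              Ioo_mem_nhdsGT_of_mem ⟨le_refl _, by positivity⟩
            filter_upwards [hmem4] with δ hδ _
            have := hδ.2; linarith
      filter_upwards [hev, self_mem_nhdsWithin] with δ hδcond hδpos
      obtain ⟨hδ2, hδgeo⟩ := hδcond
      have hδ0 : (0:ℝ) < δ := hδpos
      have hTclosed : IsClosed {y : EuclideanSpace ℝ (Fin d) | infDist y S ≤ 4*δ} :=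
        isClosed_le (continuous_infDist_pt S) continuous_const
      have hTm : MeasurableSet {y : EuclideanSpace ℝ (Fin d) | infDist y S ≤ 4*δ} :=
        hTclosed.measurableSet
      have hmem : ∀ i, ((ω i ∈ {y : EuclideanSpace ℝ (Fin d) | infDist y S ≤ 4*δ}) ↔ ω i ∈ S) := by
        intro i
        by_cases hc : ω i ∈ closure S
        · have hnif := hν_mem _ isClosed_frontier.measurableSet hfrS i
          have hint : ω i ∈ interior S := by
            by_contra hni
            exact hnif ⟨hc, hni⟩
          constructor
          · intro _; exact interior_subset hint
          · intro _
            show infDist (ω i) S ≤ 4*δ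
            rw [infDist_zero_of_mem_closure hc]; positivity
        · have h4 := hδgeo i hc
          constructor
          · intro hT'
            exact absurd (show infDist (ω i) S ≤ 4*δ from hT') (by linarith)
          · intro hS'; exact absurd (subset_closure hS') hc
      have hνT : ν {y : EuclideanSpace ℝ (Fin d) | infDist y S ≤ 4*δ} = ν S := by
        rw [hνU _ hTm, hνU S hSm]
        refine Finset.sum_congr rfl fun i _ => ?_
        rw [if_congr (hmem i) rfl rfl]
      have hfrT : ν (frontier {y : EuclideanSpace ℝ (Fin d) | infDist y S ≤ 4*δ}) = 0 := by
        apply hν_zero _ isClosed_frontier.measurableSet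
        intro i hfi
        have heq : infDist (ω i) S = 4*δ :=
          frontier_le_subset_eq (continuous_infDist_pt S) continuous_const hfi
        by_cases hc : ω i ∈ closure S
        · rw [infDist_zero_of_mem_closure hc] at heq; linarith
        · linarith [hδgeo i hc]
      have hinc : ∀ᶠ t : ℝ in atTop,
          μ {x | lam * t < ‖Z x + H x‖ ∧ ‖Z x + H x‖⁻¹ • (Z x + H x) ∈ S}
            ≤ μ {x | (lam/(1+δ)) * t < ‖Z x‖ ∧
                ‖Z x‖⁻¹ • Z x ∈ {y : EuclideanSpace ℝ (Fin d) | infDist y S ≤ 4*δ}} := by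
        filter_upwards [hpt δ ⟨hδ0, hδ2⟩ lam hlam] with t ht
        apply measure_mono_ae
        filter_upwards [ht] with x hx hxmem
        obtain ⟨h1, h2⟩ := hx.1 hxmem.1
        refine ⟨h1, ?_⟩
        show infDist (‖Z x‖⁻¹ • Z x) S ≤ 4*δ
        refine le_trans (infDist_le_dist_of_mem hxmem.2) ?_
        rw [dist_eq_norm, norm_sub_rev]
        exact h2
      calc limsup (fun t : ℝ => μ {x | lam * t < ‖Z x + H x‖ ∧
              ‖Z x + H x‖⁻¹ • (Z x + H x) ∈ S} / μ {x | t < ‖Z x‖}) atTop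
          ≤ limsup (fun t : ℝ => μ {x | (lam/(1+δ)) * t < ‖Z x‖ ∧
              ‖Z x‖⁻¹ • Z x ∈ {y : EuclideanSpace ℝ (Fin d) | infDist y S ≤ 4*δ}}
              / μ {x | t < ‖Z x‖}) atTop := by
            exact limsup_le_limsup
              (by filter_upwards [hinc] with t h; exact ENNReal.div_le_div_right h _)
              (by isBoundedDefault) (by isBoundedDefault)
        _ = ENNReal.ofReal ((lam/(1+δ)) ^ (-α)) *
              ν {y : EuclideanSpace ℝ (Fin d) | infDist y S ≤ 4*δ} :=
            (hZ (lam/(1+δ)) (by positivity) _ hTm hfrT).limsup_eq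
        _ = ENNReal.ofReal ((lam/(1+δ)) ^ (-α)) * ν S := by rw [hνT]
  have hTot : ∀ lam : ℝ, 0 < lam → Tendsto
      (fun t : ℝ => μ {x | lam * t < ‖Z x + H x‖} / μ {x | t < ‖Z x‖}) atTop
      (𝓝 (ENNReal.ofReal (lam ^ (-α)))) := by
    intro lam hlam
    have hsup : limsup (fun t : ℝ => μ {x | lam * t < ‖Z x + H x‖} / μ {x | t < ‖Z x‖})
        atTop ≤ ENNReal.ofReal (lam ^ (-α)) := by
      have h := hUB lam hlam Set.univ MeasurableSet.univ
        (by rw [frontier_univ]; exact measure_empty)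
      rw [hν_univ, mul_one] at h
      refine le_trans (le_of_eq ?_) h
      congr 1; funext t; congr 2; ext x; simp
    have hinf : ENNReal.ofReal (lam ^ (-α)) ≤ liminf
        (fun t : ℝ => μ {x | lam * t < ‖Z x + H x‖} / μ {x | t < ‖Z x‖}) atTop := by
      have hcont : Tendsto (fun δ : ℝ => ENNReal.ofReal ((lam/(1-δ)) ^ (-α)))
          (𝓝[>] (0:ℝ)) (𝓝 (ENNReal.ofReal (lam ^ (-α)))) := by
        have h1 : Tendsto (fun δ : ℝ => lam/(1-δ)) (𝓝 (0:ℝ)) (𝓝 lam) := by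
          have hca : ContinuousAt (fun δ : ℝ => lam/(1-δ)) 0 := by
            apply ContinuousAt.div continuousAt_const (continuousAt_const.sub continuousAt_id)
            norm_num
          simpa using hca.tendsto
        have h2 : ContinuousAt (fun y : ℝ => y ^ (-α)) lam :=
          Real.continuousAt_rpow_const _ _ (Or.inl (ne_of_gt hlam))
        exact ((ENNReal.continuous_ofReal.tendsto _).comp
          (h2.tendsto.comp h1)).mono_left nhdsWithin_le_nhds
      refine le_of_tendsto hcont ?_
      have hev : ∀ᶠ δ : ℝ in 𝓝[>] (0:ℝ), δ ≤ 1/2 := by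
        have h0 : ∀ᶠ δ : ℝ in 𝓝 0, δ ≤ 1/2 := by
          filter_upwards [Iio_mem_nhds (by norm_num : (0:ℝ) < 1/2)] with δ h using le_of_lt h
        exact h0.filter_mono nhdsWithin_le_nhds
      filter_upwards [hev, self_mem_nhdsWithin] with δ hδ2 hδpos
      have hδ0 : (0:ℝ) < δ := hδpos
      have h1δ : (0:ℝ) < 1 - δ := by linarith
      have hinc : ∀ᶠ t : ℝ in atTop,
          μ {x | (lam/(1-δ)) * t < ‖Z x‖} ≤ μ {x | lam * t < ‖Z x + H x‖} := by
        filter_upwards [hpt δ ⟨hδ0, hδ2⟩ lam hlam] with t ht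
        apply measure_mono_ae
        filter_upwards [ht] with x hx hxmem
        exact (hx.2 hxmem).1
      calc ENNReal.ofReal ((lam/(1-δ)) ^ (-α))
          = liminf (fun t : ℝ => μ {x | (lam/(1-δ)) * t < ‖Z x‖} / μ {x | t < ‖Z x‖})
            atTop := ((hZuniv _ (div_pos hlam h1δ)).liminf_eq).symm
        _ ≤ liminf (fun t : ℝ => μ {x | lam * t < ‖Z x + H x‖} / μ {x | t < ‖Z x‖})
            atTop :=
            liminf_le_liminf
              (by filter_upwards [hinc] with t h; exact ENNReal.div_le_div_right h _)
              (by isBoundedDefault) (by isBoundedDefault)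
    exact tendsto_of_le_liminf_of_limsup_le hinf hsup
  have hVhat : Measurable fun x => ‖Z x + H x‖⁻¹ • (Z x + H x) :=
    (hVmeas.norm.inv).smul hVmeas
  have hKey : ∀ lam : ℝ, 0 < lam → ∀ S : Set (EuclideanSpace ℝ (Fin d)),
      MeasurableSet S → ν (frontier S) = 0 →
      Tendsto (fun t : ℝ => μ {x | lam * t < ‖Z x + H x‖ ∧
          ‖Z x + H x‖⁻¹ • (Z x + H x) ∈ S} / μ {x | t < ‖Z x‖}) atTop
        (𝓝 (ENNReal.ofReal (lam ^ (-α)) * ν S)) := by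
    intro lam hlam S hSm hfrS
    have hsup := hUB lam hlam S hSm hfrS
    have hfrSc : ν (frontier Sᶜ) = 0 := by rw [frontier_compl]; exact hfrS
    have hsupc := hUB lam hlam Sᶜ hSm.compl hfrSc
    have hsum_ev : ∀ t : ℝ,
        μ {x | lam * t < ‖Z x + H x‖ ∧ ‖Z x + H x‖⁻¹ • (Z x + H x) ∈ S} +
        μ {x | lam * t < ‖Z x + H x‖ ∧ ‖Z x + H x‖⁻¹ • (Z x + H x) ∈ Sᶜ} =
        μ {x | lam * t < ‖Z x + H x‖} := by
      intro t
      rw [← measure_union ?_ ?_]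
      · congr 1; ext x
        simp only [Set.mem_union, Set.mem_setOf_eq, Set.mem_compl_iff]
        tauto
      · exact Set.disjoint_left.2 fun x hx1 hx2 => hx2.2 hx1.2
      · exact (measurableSet_lt measurable_const hVmeas.norm).inter (hVhat hSm.compl)
    have hLM : ENNReal.ofReal (lam ^ (-α)) * ν S + ENNReal.ofReal (lam ^ (-α)) * ν Sᶜ =
        ENNReal.ofReal (lam ^ (-α)) := by
      rw [← mul_add, measure_add_measure_compl hSm, hν_univ, mul_one]
    have h1 : Tendsto (fun t : ℝ =>
        (μ {x | lam * t < ‖Z x + H x‖ ∧ ‖Z x + H x‖⁻¹ • (Z x + H x) ∈ S} / μ {x | t < ‖Z x‖}) +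
        (μ {x | lam * t < ‖Z x + H x‖ ∧ ‖Z x + H x‖⁻¹ • (Z x + H x) ∈ Sᶜ} / μ {x | t < ‖Z x‖}))
        atTop (𝓝 (ENNReal.ofReal (lam ^ (-α)) * ν S + ENNReal.ofReal (lam ^ (-α)) * ν Sᶜ)) := by
      rw [hLM]
      refine (hTot lam hlam).congr fun t => ?_
      rw [← hsum_ev t, ← ENNReal.div_add_div_same]
    have hinf := liminf_sub_aux
      (ENNReal.mul_ne_top ENNReal.ofReal_ne_top (hν_fin Sᶜ)) h1 hsupc
    exact tendsto_of_le_liminf_of_limsup_le hinf hsup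
  have h2nd : Tendsto (fun t : ℝ => μ {x | t < ‖Z x + H x‖} / μ {x | t < ‖Z x‖})
      atTop (𝓝 1) := by
    have h := hKey 1 one_pos Set.univ MeasurableSet.univ
      (by rw [frontier_univ]; exact measure_empty)
    rw [hν_univ, mul_one, Real.one_rpow, ENNReal.ofReal_one] at h
    refine h.congr fun t => ?_
    congr 2; ext x; simp
  refine ⟨?_, h2nd⟩
  have hApos : ∀ t : ℝ, μ {x | t < ‖Z x‖} ≠ 0 := by
    intro t0 h0
    have hmono : ∀ t ≥ t0, μ {x | t < ‖Z x‖} = 0 := by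
      intro t ht
      refine measure_mono_null ?_ h0
      intro x hx; exact lt_of_le_of_lt ht hx
    have h := hZuniv 1 one_pos
    rw [Real.one_rpow, ENNReal.ofReal_one] at h
    have hev := h.eventually (eventually_gt_nhds (by norm_num : (0:ℝ≥0∞) < 1))
    obtain ⟨t, hlt, hge⟩ := (hev.and (eventually_ge_atTop t0)).exists
    have hz : μ {x | 1 * t < ‖Z x‖} = 0 := by rw [one_mul]; exact hmono t hge
    rw [hz, ENNReal.zero_div] at hlt
    exact lt_irrefl _ hlt
  have hAfin : ∀ t : ℝ, μ {x | t < ‖Z x‖} ≠ ∞ := fun t => measure_ne_top μ _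
  intro lam hlam S hSm hfrS
  have h1 := hKey lam hlam S hSm hfrS
  have hdiv := ENNReal.Tendsto.div h1 (Or.inr one_ne_zero) h2nd (Or.inl ENNReal.one_ne_top)
  rw [div_one] at hdiv
  refine hdiv.congr fun t => ?_
  rw [div_eq_mul_inv (μ {x | lam * t < ‖Z x + H x‖ ∧ ‖Z x + H x‖⁻¹ • (Z x + H x) ∈ S}),
    div_eq_mul_inv (μ {x | t < ‖Z x + H x‖}),
    ENNReal.mul_div_mul_right _ _ (ENNReal.inv_ne_zero.2 (hAfin t))
      (ENNReal.inv_ne_top.2 (hApos t))]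
end

section
/- For the tripling map T(x)=3x mod 1 and X=[0,1]∖([1/9,2/9]∪[1/3,4/9]), the first return time R to X satisfies: R∈L^p(μ_X) for every p<∞ (indeed μ_X(R>n) decays exponentially in n), since points with long return times lie, after one iterate, in cylinders of the form [0(01)^n]∪[1(10)^n]∪[2(01)^n]∪[2(10)^n] whose Lebesgue measure decays like 3^{−2n}. -/
open Set MeasureTheory
open scoped ENNReal

/-- The tripling map `T x = 3x mod 1`. -/
noncomputable def triplingT : ℝ → ℝ := fun x => Int.fract (3 * x)

lemma fract_pow_fract (j : ℕ) (y : ℝ) :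
    Int.fract ((3:ℝ)^j * Int.fract y) = Int.fract ((3:ℝ)^j * y) := by
  have h : (3:ℝ)^j * Int.fract y = 3^j * y - ((3^j * ⌊y⌋ : ℤ) : ℝ) := by
    rw [Int.fract]; push_cast; ring
  rw [h, Int.fract_sub_intCast]

lemma triplingT_iterate (j : ℕ) (y : ℝ) (hy : y ∈ Set.Ico (0:ℝ) 1) :
    triplingT^[j] y = Int.fract ((3:ℝ)^j * y) := by
  induction j generalizing y with
  | zero => simp [Int.fract_eq_self.2 ⟨hy.1, hy.2⟩]
  | succ j ih =>
    rw [Function.iterate_succ_apply]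
    have h1 : triplingT y = Int.fract (3 * y) := rfl
    rw [ih (triplingT y) ⟨Int.fract_nonneg _, Int.fract_lt_one _⟩, h1, fract_pow_fract]
    congr 1; ring

noncomputable def pqSeq : ℕ → ℝ × ℝ
  | 0 => (1/9, 1/3)
  | n+1 => ((pqSeq n).2 / 3, ((pqSeq n).1 + 1) / 3)

lemma pqSeq_bounds (m : ℕ) :
    1/9 ≤ (pqSeq m).1 ∧ (pqSeq m).1 + (1/3:ℝ)^(m+2) ≤ 2/9 ∧
    1/3 ≤ (pqSeq m).2 ∧ (pqSeq m).2 + (1/3:ℝ)^(m+2) ≤ 4/9 := by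
  induction m with
  | zero => norm_num [pqSeq]
  | succ m ih =>
    obtain ⟨h1, h2, h3, h4⟩ := ih
    have hp : (1/3:ℝ) ^ (m+1+2) = (1/3)^(m+2) * (1/3) := by ring
    refine ⟨?_, ?_, ?_, ?_⟩ <;> simp only [pqSeq, hp] <;> linarith

lemma key_lemma : ∀ (m : ℕ) (y : ℝ), y ∈ Set.Ico (0:ℝ) 1 →
    (∀ j ≤ m, Int.fract ((3:ℝ)^j * y) ∈ Set.Ico (1/9:ℝ) (2/9) ∪ Set.Ico (1/3:ℝ) (4/9)) →
    y ∈ Set.Ico (pqSeq m).1 ((pqSeq m).1 + (1/3:ℝ)^(m+2)) ∪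
        Set.Ico (pqSeq m).2 ((pqSeq m).2 + (1/3:ℝ)^(m+2)) := by
  intro m
  induction m with
  | zero =>
    intro y hy h
    have h0 := h 0 le_rfl
    rw [pow_zero, one_mul, Int.fract_eq_self.2 ⟨hy.1, hy.2⟩] at h0
    have e1 : (1/9:ℝ) + (1/3)^(0+2) = 2/9 := by norm_num
    have e2 : (1/3:ℝ) + (1/3)^(0+2) = 4/9 := by norm_num
    simp only [pqSeq, e1, e2]
    exact h0
  | succ m ih =>
    intro y hy h
    have h0 := h 0 (Nat.zero_le _)
    rw [pow_zero, one_mul, Int.fract_eq_self.2 ⟨hy.1, hy.2⟩] at h0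
    set z := Int.fract (3 * y) with hz
    have hz01 : z ∈ Set.Ico (0:ℝ) 1 := ⟨Int.fract_nonneg _, Int.fract_lt_one _⟩
    have hzj : ∀ j ≤ m, Int.fract ((3:ℝ)^j * z) ∈ Set.Ico (1/9:ℝ) (2/9) ∪ Set.Ico (1/3:ℝ) (4/9) := by
      intro j hj
      rw [hz, fract_pow_fract]
      have e : (3:ℝ)^j * (3*y) = 3^(j+1) * y := by ring
      rw [e]
      exact h (j+1) (Nat.succ_le_succ hj)
    have hzPQ := ih z hz01 hzj
    obtain ⟨hb1, hb2, hb3, hb4⟩ := pqSeq_bounds m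
    have hlen : (1/3:ℝ)^(m+1+2) = (1/3)^(m+2) / 3 := by ring
    have hP1 : (pqSeq (m+1)).1 = (pqSeq m).2 / 3 := rfl
    have hP2 : (pqSeq (m+1)).2 = ((pqSeq m).1 + 1) / 3 := rfl
    rcases h0 with hy0 | hy0
    · -- y ∈ [1/9,2/9) : z = 3y
      have h3y : z = 3*y := by
        rw [hz]; exact Int.fract_eq_self.2 ⟨by linarith [hy0.1], by linarith [hy0.2]⟩
      rcases hzPQ with hzP | hzQ
      · exfalso
        have h5 := hzP.2
        rw [h3y] at h5
        have h13 : (1/3:ℝ) ≤ 3*y := by linarith [hy0.1]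
        linarith
      · left
        have hq1 : (pqSeq m).2 ≤ 3*y := by rw [← h3y]; exact hzQ.1
        have hq2 : 3*y < (pqSeq m).2 + (1/3:ℝ)^(m+2) := by rw [← h3y]; exact hzQ.2
        rw [Set.mem_Ico, hP1, hlen]
        constructor <;> linarith
    · -- y ∈ [1/3,4/9) : z = 3y - 1
      have h3y : z = 3*y - 1 := by
        have e : Int.fract (3*y - 1) = Int.fract (3*y) := by
          rw [show (3:ℝ)*y - 1 = 3*y - ((1:ℤ):ℝ) by norm_num, Int.fract_sub_intCast]
        rw [hz, ← e]
        exact Int.fract_eq_self.2 ⟨by linarith [hy0.1], by linarith [hy0.2]⟩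
      rcases hzPQ with hzP | hzQ
      · right
        have hq1 : (pqSeq m).1 ≤ 3*y - 1 := by rw [← h3y]; exact hzP.1
        have hq2 : 3*y - 1 < (pqSeq m).1 + (1/3:ℝ)^(m+2) := by rw [← h3y]; exact hzP.2
        rw [Set.mem_Ico, hP2, hlen]
        constructor <;> linarith
      · exfalso
        have h5 : (pqSeq m).2 ≤ 3*y - 1 := by rw [← h3y]; exact hzQ.1
        linarith [hy0.2]

def badSet : Set ℝ := {y | ∃ j : ℕ, Int.fract ((3:ℝ)^j * y) = 2/9 ∨ Int.fract ((3:ℝ)^j * y) = 4/9}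

lemma badSet_countable : badSet.Countable := by
  have hsub : badSet ⊆ ⋃ (j : ℕ), ⋃ (k : ℤ),
      ({(2/9 + (k:ℝ))/3^j} ∪ {(4/9 + (k:ℝ))/3^j} : Set ℝ) := by
    rintro y ⟨j, hj⟩
    have h3 : ((3:ℝ)^j) ≠ 0 := by positivity
    rcases hj with h | h
    · refine Set.mem_iUnion.2 ⟨j, Set.mem_iUnion.2 ⟨⌊(3:ℝ)^j * y⌋, Or.inl ?_⟩⟩
      have hf : (3:ℝ)^j * y = 2/9 + (⌊(3:ℝ)^j * y⌋ : ℝ) := by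
        have := Int.fract_add_floor ((3:ℝ)^j * y)
        rw [h] at this
        linarith [this]
      simp only [Set.mem_singleton_iff]
      rw [eq_div_iff h3]
      linear_combination hf
    · refine Set.mem_iUnion.2 ⟨j, Set.mem_iUnion.2 ⟨⌊(3:ℝ)^j * y⌋, Or.inr ?_⟩⟩
      have hf : (3:ℝ)^j * y = 4/9 + (⌊(3:ℝ)^j * y⌋ : ℝ) := by
        have := Int.fract_add_floor ((3:ℝ)^j * y)
        rw [h] at this
        linarith [this]
      simp only [Set.mem_singleton_iff]
      rw [eq_div_iff h3]
      linear_combination hf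
  exact Set.Countable.mono hsub
    (Set.countable_iUnion fun j => Set.countable_iUnion fun k =>
      (Set.countable_singleton _).union (Set.countable_singleton _))


lemma R_measurable (X : Set ℝ) (hXm : MeasurableSet X) (R : ℝ → ℕ)
    (hR : ∀ x, R x = sInf {n : ℕ | 1 ≤ n ∧ triplingT^[n] x ∈ X}) :
    Measurable R := by
  have hT : Measurable triplingT := measurable_fract.comp (measurable_const.mul measurable_id)
  have hTn : ∀ n : ℕ, Measurable (triplingT^[n]) := fun n => hT.iterate n
  have hAk : ∀ k : ℕ, MeasurableSet {x : ℝ | 1 ≤ k ∧ triplingT^[k] x ∈ X} := by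
    intro k
    rcases Nat.eq_zero_or_pos k with hk | hk
    · subst hk; simp
    · have he : {x : ℝ | 1 ≤ k ∧ triplingT^[k] x ∈ X} = triplingT^[k] ⁻¹' X := by
        ext x; exact ⟨fun h => h.2, fun h => ⟨hk, h⟩⟩
      rw [he]; exact hTn k hXm
  apply measurable_to_countable'
  intro n
  match n with
  | 0 =>
      have he : R ⁻¹' {0} = ⋂ k : ℕ, {x : ℝ | 1 ≤ k ∧ triplingT^[k] x ∈ X}ᶜ := by
        ext x
        simp only [Set.mem_preimage, Set.mem_singleton_iff, Set.mem_iInter, Set.mem_compl_iff,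
          Set.mem_setOf_eq, hR x]
        constructor
        · intro h0 k hk
          have h1 := Nat.sInf_mem (⟨k, hk⟩ : Set.Nonempty {n : ℕ | 1 ≤ n ∧ triplingT^[n] x ∈ X})
          rw [h0] at h1
          exact absurd h1.1 (by norm_num)
        · intro h
          have he2 : {n : ℕ | 1 ≤ n ∧ triplingT^[n] x ∈ X} = ∅ := by
            ext k
            simp only [Set.mem_setOf_eq, Set.mem_empty_iff_false, iff_false]
            exact h k
          rw [he2, Nat.sInf_empty]
      rw [he]; exact MeasurableSet.iInter fun k => (hAk k).compl
  | (m+1) =>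
      have he : R ⁻¹' {m+1} =
          {x : ℝ | 1 ≤ m+1 ∧ triplingT^[m+1] x ∈ X} ∩
            ⋂ k ∈ Finset.range (m+1), {x : ℝ | 1 ≤ k ∧ triplingT^[k] x ∈ X}ᶜ := by
        ext x
        simp only [Set.mem_preimage, Set.mem_singleton_iff, hR x, Set.mem_inter_iff,
          Set.mem_iInter, Set.mem_compl_iff, Set.mem_setOf_eq, Finset.mem_range]
        constructor
        · intro h
          have hne : ({n : ℕ | 1 ≤ n ∧ triplingT^[n] x ∈ X}).Nonempty := by
            by_contra hemp
            rw [Set.not_nonempty_iff_eq_empty] at hemp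
            rw [hemp, Nat.sInf_empty] at h
            omega
          have hmem := Nat.sInf_mem hne
          rw [h] at hmem
          refine ⟨hmem, fun k hk => ?_⟩
          have : k ∉ {n : ℕ | 1 ≤ n ∧ triplingT^[n] x ∈ X} :=
            Nat.notMem_of_lt_sInf (by rw [h]; exact hk)
          exact this
        · rintro ⟨hmem, hlt⟩
          have h1 : sInf {n : ℕ | 1 ≤ n ∧ triplingT^[n] x ∈ X} ≤ m+1 := Nat.sInf_le hmem
          rcases Nat.lt_or_ge (sInf {n : ℕ | 1 ≤ n ∧ triplingT^[n] x ∈ X}) (m+1) with h3 | h3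
          · have hlt' : ∀ k, k < m+1 → k ∉ {n : ℕ | 1 ≤ n ∧ triplingT^[n] x ∈ X} := hlt
            exact absurd (Nat.sInf_mem ⟨_, hmem⟩) (hlt' _ h3)
          · omega
      rw [he]
      exact (hAk (m+1)).inter
        (MeasurableSet.iInter fun k => MeasurableSet.iInter fun _ => (hAk k).compl)


theorem stmt16 (X : Set ℝ)
    (hX : X = Set.Icc (0:ℝ) 1 \ (Set.Icc (1/9:ℝ) (2/9) ∪ Set.Icc (1/3:ℝ) (4/9)))
    (R : ℝ → ℕ) (hR : ∀ x, R x = sInf {n : ℕ | 1 ≤ n ∧ triplingT^[n] x ∈ X})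
    (μX : Measure ℝ) (hμ : μX = ((9:ℝ≥0∞)/7) • volume.restrict X) :
    (∃ C > 0, ∃ θ ∈ Set.Ioo (0:ℝ) 1, ∀ n : ℕ,
      μX {x | n < R x} ≤ ENNReal.ofReal (C * θ ^ n)) ∧
    (∀ p : ℝ, 1 ≤ p → MemLp (fun x => (R x : ℝ)) (ENNReal.ofReal p) μX) := by
  have hXsub : X ⊆ Set.Icc (0:ℝ) 1 := by rw [hX]; exact Set.diff_subset
  have hXm : MeasurableSet X := by
    rw [hX]
    exact measurableSet_Icc.diff (measurableSet_Icc.union measurableSet_Icc)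
  have hRmeas : Measurable R := R_measurable X hXm R hR
  have hSn : ∀ n : ℕ, MeasurableSet {x : ℝ | n < R x} := fun n => hRmeas measurableSet_Ioi
  have h97 : ((9:ℝ≥0∞)/7) ≤ 2 := by
    rw [ENNReal.div_le_iff_le_mul (Or.inl (by norm_num)) (Or.inl (by norm_num))]
    norm_num
  have key_bound : ∀ n : ℕ, μX {x | n < R x} ≤ ENNReal.ofReal (2 * (1/3:ℝ)^n) := by
    intro n
    rw [hμ, Measure.smul_apply, smul_eq_mul, Measure.restrict_apply (hSn n)]
    cases n with
    | zero =>
      have h1 : volume ({x : ℝ | 0 < R x} ∩ X) ≤ 1 := by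
        refine le_trans (measure_mono (Set.inter_subset_right.trans hXsub)) ?_
        rw [Real.volume_Icc]; norm_num
      calc (9:ℝ≥0∞)/7 * volume ({x : ℝ | 0 < R x} ∩ X) ≤ 2 * 1 := mul_le_mul' h97 h1
        _ ≤ ENNReal.ofReal (2 * (1/3:ℝ)^0) := by
            rw [show (2:ℝ) * (1/3:ℝ)^0 = 2 by norm_num]
            simp
    | succ n =>
      obtain ⟨hb1, hb2, hb3, hb4⟩ := pqSeq_bounds n
      set p := (pqSeq n).1 with hp
      set q := (pqSeq n).2 with hq
      set L : ℝ := (1/3)^(n+3) with hL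
      have hL0 : (0:ℝ) ≤ L := by positivity
      have hL3 : (1/3:ℝ)^(n+2) = 3*L := by rw [hL]; ring
      set U : Set ℝ := Set.Ico (p/3) (p/3+L) ∪ Set.Ico ((p+1)/3) ((p+1)/3+L) ∪
        Set.Ico ((p+2)/3) ((p+2)/3+L) ∪ Set.Ico (q/3) (q/3+L) ∪
        Set.Ico ((q+1)/3) ((q+1)/3+L) ∪ Set.Ico ((q+2)/3) ((q+2)/3+L) with hU
      have hsub : {x : ℝ | n+1 < R x} ∩ X ⊆ U ∪ badSet := by
        rintro x ⟨hxR, hxX⟩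
        by_cases hxB : x ∈ badSet
        · exact Or.inr hxB
        left
        have hxIcc : x ∈ Set.Icc (0:ℝ) 1 := hXsub hxX
        simp only [Set.mem_setOf_eq] at hxR
        rw [hR x] at hxR
        have hnot : ∀ k, 1 ≤ k → k ≤ n+1 → triplingT^[k] x ∉ X := by
          intro k h1 h2 hmem
          have := Nat.sInf_le (show k ∈ {m : ℕ | 1 ≤ m ∧ triplingT^[m] x ∈ X} from ⟨h1, hmem⟩)
          omega
        set y := triplingT x with hy
        have hy01 : y ∈ Set.Ico (0:ℝ) 1 := ⟨Int.fract_nonneg _, Int.fract_lt_one _⟩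
        have hyj : ∀ j ≤ n, Int.fract ((3:ℝ)^j * y) ∈ Set.Ico (1/9:ℝ) (2/9) ∪ Set.Ico (1/3:ℝ) (4/9) := by
          intro j hj
          have hiter : triplingT^[j+1] x = Int.fract ((3:ℝ)^j * y) := by
            rw [Function.iterate_succ_apply]
            exact triplingT_iterate j y hy01
          have hveq : Int.fract ((3:ℝ)^j * y) = Int.fract ((3:ℝ)^(j+1) * x) := by
            rw [hy]
            show Int.fract ((3:ℝ)^j * Int.fract (3*x)) = _
            rw [fract_pow_fract]
            congr 1; ring
          have hnm : Int.fract ((3:ℝ)^j * y) ∉ X := by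
            rw [← hiter]; exact hnot (j+1) (by omega) (by omega)
          have hv0 : (0:ℝ) ≤ Int.fract ((3:ℝ)^j * y) := Int.fract_nonneg _
          have hv1 : Int.fract ((3:ℝ)^j * y) < 1 := Int.fract_lt_one _
          have hvcc : Int.fract ((3:ℝ)^j * y) ∈ Set.Icc (1/9:ℝ) (2/9) ∪ Set.Icc (1/3:ℝ) (4/9) := by
            by_contra hc
            rw [hX] at hnm
            exact hnm ⟨⟨hv0, hv1.le⟩, hc⟩
          have hb2' : Int.fract ((3:ℝ)^j * y) ≠ 2/9 := by
            rw [hveq]; exact fun hcon => hxB ⟨j+1, Or.inl hcon⟩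
          have hb4' : Int.fract ((3:ℝ)^j * y) ≠ 4/9 := by
            rw [hveq]; exact fun hcon => hxB ⟨j+1, Or.inr hcon⟩
          rcases hvcc with hmem | hmem
          · exact Or.inl ⟨hmem.1, lt_of_le_of_ne hmem.2 hb2'⟩
          · exact Or.inr ⟨hmem.1, lt_of_le_of_ne hmem.2 hb4'⟩
        have hyPQ := key_lemma n y hy01 hyj
        have h19 : (1/9:ℝ) ≤ y := by
          rcases hyPQ with hm | hm
          · linarith [hm.1]
          · linarith [hm.1]
        have hx1 : x < 1 := by
          rcases lt_or_eq_of_le hxIcc.2 with hlt | heq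
          · exact hlt
          · exfalso
            have hy3 : y = Int.fract ((0:ℝ) + ((3:ℤ):ℝ)) := by
              rw [hy]
              show Int.fract (3*x) = _
              rw [heq]
              norm_num
            rw [Int.fract_add_intCast, Int.fract_zero] at hy3
            linarith
        have hyx : y = 3*x - (⌊3*x⌋:ℝ) := by rw [hy]; rfl
        have hk0 : (0:ℤ) ≤ ⌊3*x⌋ := Int.floor_nonneg.2 (by linarith [hxIcc.1])
        have hk2 : ⌊3*x⌋ < 3 := by
          rw [Int.floor_lt]
          push_cast
          linarith
        rw [hU]
        simp only [Set.mem_union, Set.mem_Ico]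
        obtain ⟨k, hk⟩ : ∃ k : ℤ, ⌊3*x⌋ = k := ⟨_, rfl⟩
        rw [hk] at hyx hk0 hk2
        rcases hyPQ with hm | hm
        · have hm1 : p ≤ y := hm.1
          have hm2 : y < p + 3*L := by rw [← hL3]; exact hm.2
          interval_cases k
          · norm_num at hyx
            exact Or.inl (Or.inl (Or.inl (Or.inl (Or.inl ⟨by linarith, by linarith⟩))))
          · norm_num at hyx
            exact Or.inl (Or.inl (Or.inl (Or.inl (Or.inr ⟨by linarith, by linarith⟩))))
          · norm_num at hyx
            exact Or.inl (Or.inl (Or.inl (Or.inr ⟨by linarith, by linarith⟩)))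
        · have hm1 : q ≤ y := hm.1
          have hm2 : y < q + 3*L := by rw [← hL3]; exact hm.2
          interval_cases k
          · norm_num at hyx
            exact Or.inl (Or.inl (Or.inr ⟨by linarith, by linarith⟩))
          · norm_num at hyx
            exact Or.inl (Or.inr ⟨by linarith, by linarith⟩)
          · norm_num at hyx
            exact Or.inr ⟨by linarith, by linarith⟩
      have h1 : ∀ c : ℝ, volume (Set.Ico c (c+L)) = ENNReal.ofReal L := by
        intro c; rw [Real.volume_Ico]; ring_nf
      have hvolU : volume U ≤ ENNReal.ofReal L * 6 := by
        rw [hU]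
        refine le_trans (measure_union_le _ _) ?_
        refine le_trans (add_le_add_left (measure_union_le _ _) _) ?_
        refine le_trans (add_le_add_left (add_le_add_left (measure_union_le _ _) _) _) ?_
        refine le_trans (add_le_add_left (add_le_add_left (add_le_add_left (measure_union_le _ _) _) _) _) ?_
        refine le_trans (add_le_add_left (add_le_add_left (add_le_add_left (add_le_add_left (measure_union_le _ _) _) _) _) _) ?_
        rw [h1, h1, h1, h1, h1, h1]
        exact le_of_eq (by ring)
      have hvol : volume ({x : ℝ | n+1 < R x} ∩ X) ≤ ENNReal.ofReal L * 6 := by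
        refine le_trans (measure_mono hsub) ?_
        refine le_trans (measure_union_le _ _) ?_
        rw [badSet_countable.measure_zero volume, add_zero]
        exact hvolU
      have hstep : ENNReal.ofReal L * 6 ≤ ENNReal.ofReal ((1/3:ℝ)^(n+1)) := by
        rw [show (6:ℝ≥0∞) = ENNReal.ofReal (6:ℝ) by simp, ← ENNReal.ofReal_mul hL0]
        refine ENNReal.ofReal_le_ofReal ?_
        rw [hL]
        have hpow : (0:ℝ) ≤ (1/3:ℝ)^(n+1) := by positivity
        have he : (1/3:ℝ)^(n+3)*6 = (2/3)*(1/3:ℝ)^(n+1) := by ring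
        linarith
      calc (9:ℝ≥0∞)/7 * volume ({x : ℝ | n+1 < R x} ∩ X)
          ≤ 2 * ENNReal.ofReal ((1/3:ℝ)^(n+1)) := mul_le_mul' h97 (le_trans hvol hstep)
        _ = ENNReal.ofReal (2*(1/3:ℝ)^(n+1)) := by
            rw [ENNReal.ofReal_mul (by norm_num : (0:ℝ) ≤ 2)]
            norm_num
  constructor
  · exact ⟨2, by norm_num, 1/3, by norm_num, key_bound⟩
  · intro pp hpp
    have hp0 : 0 < pp := by linarith
    have hq0 : ENNReal.ofReal pp ≠ 0 := (ENNReal.ofReal_pos.2 hp0).ne'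
    have hqt : ENNReal.ofReal pp ≠ ⊤ := ENNReal.ofReal_ne_top
    have hmeasRR : Measurable (fun x => (R x : ℝ)) := measurable_from_top.comp hRmeas
    refine ⟨hmeasRR.aestronglyMeasurable, ?_⟩
    rw [eLpNorm_eq_lintegral_rpow_enorm_toReal hq0 hqt, ENNReal.toReal_ofReal hp0.le]
    refine ENNReal.rpow_lt_top_of_nonneg (by positivity) ?_
    have hpt : ∀ x : ℝ, ((‖((R x : ℕ) : ℝ)‖₊ : ℝ≥0∞)) ^ pp ≤
        ∑' m : ℕ, Set.indicator {x : ℝ | m < R x} (fun _ => (((m+1:ℕ)) : ℝ≥0∞) ^ pp) x := by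
      intro x
      have hnn : ((‖((R x : ℕ) : ℝ)‖₊ : ℝ≥0∞)) = ((R x : ℕ) : ℝ≥0∞) := by
        rw [Real.nnnorm_natCast]
        simp
      rcases Nat.eq_zero_or_pos (R x) with h0 | h0
      · rw [hnn, h0]
        simp only [Nat.cast_zero]
        rw [ENNReal.zero_rpow_of_pos hp0]
        exact zero_le
      · have hx : x ∈ {y : ℝ | R x - 1 < R y} := by simp only [Set.mem_setOf_eq]; omega
        have heq1 : Set.indicator {y : ℝ | R x - 1 < R y} (fun _ => (((R x - 1 + 1:ℕ)) : ℝ≥0∞) ^ pp) x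
            = ((R x : ℕ) : ℝ≥0∞) ^ pp := by
          rw [Set.indicator_of_mem hx, Nat.sub_add_cancel h0]
        rw [hnn, ← heq1]
        exact ENNReal.le_tsum (R x - 1)
    have hint : ∫⁻ x, ((‖((R x : ℕ) : ℝ)‖₊ : ℝ≥0∞)) ^ pp ∂μX ≤
        ∑' m : ℕ, (((m+1:ℕ)) : ℝ≥0∞) ^ pp * μX {x : ℝ | m < R x} := by
      refine le_trans (lintegral_mono hpt) ?_
      rw [lintegral_tsum (fun m => ((measurable_const.indicator (hSn m)).aemeasurable))]
      refine ENNReal.tsum_le_tsum fun m => ?_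
      rw [lintegral_indicator_const (hSn m)]
    have hterm : ∀ m : ℕ, (((m+1:ℕ)) : ℝ≥0∞) ^ pp * μX {x : ℝ | m < R x} ≤
        ENNReal.ofReal ((((m+1:ℕ)) : ℝ)^pp * (2 * (1/3:ℝ)^m)) := by
      intro m
      rw [ENNReal.ofReal_mul (by positivity)]
      refine mul_le_mul' (le_of_eq ?_) (key_bound m)
      rw [← ENNReal.ofReal_rpow_of_nonneg (by positivity) hp0.le, ENNReal.ofReal_natCast]
    have hsummable : Summable (fun m : ℕ => (((m+1:ℕ)) : ℝ)^pp * (2 * (1/3:ℝ)^m)) := by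
      have h0 : Summable (fun m : ℕ => ((m:ℝ))^(⌈pp⌉₊) * (1/3:ℝ)^m) :=
        summable_pow_mul_geometric_of_norm_lt_one (⌈pp⌉₊) (by rw [Real.norm_eq_abs, abs_lt]; norm_num)
      have h1 : Summable (fun m : ℕ => 6 * ((((m+1:ℕ)):ℝ)^(⌈pp⌉₊) * (1/3:ℝ)^(m+1))) := by
        have h2 := h0.comp_injective Nat.succ_injective
        exact h2.mul_left 6
      refine h1.of_nonneg_of_le (fun m => by positivity) (fun m => ?_)
      have hbase : (1:ℝ) ≤ ((m+1:ℕ):ℝ) := by push_cast; linarith [Nat.cast_nonneg (α:=ℝ) m]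
      have hA : (((m+1:ℕ)):ℝ)^pp ≤ (((m+1:ℕ)):ℝ)^((⌈pp⌉₊:ℝ)) :=
        Real.rpow_le_rpow_of_exponent_le hbase (Nat.le_ceil pp)
      have hB : (((m+1:ℕ)):ℝ)^((⌈pp⌉₊:ℝ)) = (((m+1:ℕ)):ℝ)^(⌈pp⌉₊) := Real.rpow_natCast _ _
      have hC : (0:ℝ) < 2 * (1/3:ℝ)^m := by positivity
      have hD : 6 * ((((m+1:ℕ)):ℝ)^(⌈pp⌉₊) * (1/3:ℝ)^(m+1)) = (((m+1:ℕ)):ℝ)^(⌈pp⌉₊) * (2*(1/3:ℝ)^m) := by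
        push_cast
        ring
      rw [hD]
      exact mul_le_mul_of_nonneg_right (hB ▸ hA) hC.le
    have hfin : ∑' m : ℕ, (((m+1:ℕ)) : ℝ≥0∞) ^ pp * μX {x : ℝ | m < R x} < ⊤ := by
      refine lt_of_le_of_lt (ENNReal.tsum_le_tsum hterm) ?_
      rw [← ENNReal.ofReal_tsum_of_nonneg (fun m => by positivity) hsummable]
      exact ENNReal.ofReal_lt_top
    exact (lt_of_le_of_lt hint hfin).ne
end
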